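/- The infinite sequence of 2-element subsets 12, 13, 23, 34, 35, 45, 56, 57, 67, 78, 79, 89, ... (obtained by repeatedly appending {a,a+2}, {a+1,a+2}, {a+2,a+3} after a term {a,a+1}) has the property that for every n >= 3, its first ceil(3n/2) - 2 terms form a monotone weakly separated path from {1,2} to {n-1,n}. -/

import Mathlib

/-- The simple transposition `s_i = (i, i+1)` (1-indexed values) in `S_n`,
realized on `Fin n` (0-indexed positions `i-1` and `i`); junk value `1` otherwise. -/
def sgen (n i : ℕ) : Equiv.Perm (Fin n) :=
  if h : 0 < i ∧ i < n then Equiv.swap ⟨i - 1, by omega⟩ ⟨i, h.2⟩ else 1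

/-- `l` is a reduced word for `w ∈ S_n`: its product is `w` and it has minimal length. -/
def IsReducedWordFor (n : ℕ) (l : List ℕ) (w : Equiv.Perm (Fin n)) : Prop :=
  (l.map (sgen n)).prod = w ∧
    ∀ l' : List ℕ, (l'.map (sgen n)).prod = w → l.length ≤ l'.length

/-- The longest permutation `w_0 = n (n-1) ⋯ 2 1` of `S_n`. -/
def longestPerm (n : ℕ) : Equiv.Perm (Fin n) := Fin.revPerm

/-- `M(k,n)`: the maximum multiplicity of `s_k` among reduced words of `w_0 ∈ S_n`. -/
noncomputable def Mmax (k n : ℕ) : ℕ :=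
  sSup {N | ∃ l : List ℕ, IsReducedWordFor n l (longestPerm n) ∧ l.count k = N}

/-- Two finite sets are weakly separated. -/
def WeaklySeparated (I J : Finset ℕ) : Prop :=
  (∀ a ∈ I \ J, ∀ b ∈ J \ I, a < b) ∨ (∀ b ∈ J \ I, ∀ a ∈ I \ J, b < a)

/-- A monotone weakly separated path: pairwise weakly separated, and each step removes
one element `y` and adds one element `x > y`. -/
def IsMWSPath (P : List (Finset ℕ)) : Prop :=
  (∀ A ∈ P, ∀ B ∈ P, WeaklySeparated A B) ∧
    List.Chain' (fun A B => ∃ x y, y ∈ A ∧ x ∉ A ∧ y < x ∧ B = insert x (A.erase y)) P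

/-- The infinite sequence `12, 13, 23, 34, 35, 45, 56, 57, 67, 78, …` of 2-element sets. -/
def twoSeq : ℕ → Finset ℕ
  | 0 => {1, 2}
  | (i + 1) =>
      match i % 3 with
      | 0 => {2 * (i / 3) + 1, 2 * (i / 3) + 3}
      | 1 => {2 * (i / 3) + 2, 2 * (i / 3) + 3}
      | _ => {2 * (i / 3) + 3, 2 * (i / 3) + 4}


lemma twoSeq_eq (m : ℕ) :
    twoSeq m = if m % 3 = 0 then {2*(m/3)+1, 2*(m/3)+2}
      else if m % 3 = 1 then {2*(m/3)+1, 2*(m/3)+3}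
      else {2*(m/3)+2, 2*(m/3)+3} := by
  match m with
  | 0 => simp [twoSeq]
  | (i+1) =>
    have h3 : i % 3 = 0 ∨ i % 3 = 1 ∨ i % 3 = 2 := by omega
    rcases h3 with h | h | h
    · have h1 : (i+1) % 3 = 1 := by omega
      have h2 : (i+1) / 3 = i / 3 := by omega
      simp [twoSeq, h, h1, h2]
    · have h1 : (i+1) % 3 = 2 := by omega
      have h2 : (i+1) / 3 = i / 3 := by omega
      simp [twoSeq, h, h1, h2]
    · have h1 : (i+1) % 3 = 0 := by omega
      have h2 : (i+1) / 3 = i / 3 + 1 := by omega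
      simp [twoSeq, h, h1, h2]
      ring_nf

def GoodSet (s : Finset ℕ) : Prop :=
  (∃ a, s = {a, a+1}) ∨ (∃ a, s = {2*a+1, 2*a+3})

lemma good_twoSeq (m : ℕ) : GoodSet (twoSeq m) := by
  rw [twoSeq_eq]
  split_ifs with h1 h2
  · exact Or.inl ⟨2*(m/3)+1, by norm_num⟩
  · exact Or.inr ⟨m/3, rfl⟩
  · exact Or.inl ⟨2*(m/3)+2, by norm_num⟩

lemma ws_helper (I J : Finset ℕ)
    (h : ∀ a ∈ I, a ∉ J → ∀ b ∈ J, b ∉ I → ∀ a' ∈ I, a' ∉ J → ∀ b' ∈ J, b' ∉ I →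
      ¬(a < b ∧ b' < a')) : WeaklySeparated I J := by
  by_cases hl : ∀ a ∈ I \ J, ∀ b ∈ J \ I, a < b
  · exact Or.inl hl
  · right
    push_neg at hl
    obtain ⟨a0, ha0, b0, hb0, hab⟩ := hl
    simp only [Finset.mem_sdiff] at ha0 hb0
    intro b hb a ha
    simp only [Finset.mem_sdiff] at ha hb
    by_contra hba
    have hne : a ≠ b := fun h => hb.2 (h ▸ ha.1)
    have h1 : a < b := by omega
    have hne0 : a0 ≠ b0 := fun h => hb0.2 (h ▸ ha0.1)
    have h2 : b0 < a0 := by omega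
    exact h a ha.1 ha.2 b hb.1 hb.2 a0 ha0.1 ha0.2 b0 hb0.1 hb0.2 ⟨h1, h2⟩

lemma ws_good {I J : Finset ℕ} (hI : GoodSet I) (hJ : GoodSet J) :
    WeaklySeparated I J := by
  apply ws_helper
  intro a haI haJ b hbJ hbI a' ha'I ha'J b' hb'J hb'I
  rcases hI with ⟨p, rfl⟩ | ⟨p, rfl⟩ <;> rcases hJ with ⟨q, rfl⟩ | ⟨q, rfl⟩ <;>
    simp only [Finset.mem_insert, Finset.mem_singleton] at * <;> omega

lemma twoSeq_step (m : ℕ) :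
    ∃ x y, y ∈ twoSeq m ∧ x ∉ twoSeq m ∧ y < x ∧
      twoSeq (m+1) = insert x ((twoSeq m).erase y) := by
  have h3 : m % 3 = 0 ∨ m % 3 = 1 ∨ m % 3 = 2 := by omega
  rcases h3 with h | h | h
  · have h1 : (m+1) % 3 = 1 := by omega
    have h2 : (m+1) / 3 = m / 3 := by omega
    have eA : twoSeq m = {2*(m/3)+1, 2*(m/3)+2} := by rw [twoSeq_eq]; simp [h]
    have eB : twoSeq (m+1) = {2*(m/3)+1, 2*(m/3)+3} := by rw [twoSeq_eq]; simp [h1, h2]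
    rw [eA, eB]
    refine ⟨2*(m/3)+3, 2*(m/3)+2, ?_, ?_, by omega, ?_⟩
    · simp
    · simp
    · ext x
      simp only [Finset.mem_insert, Finset.mem_singleton, Finset.mem_erase]
      omega
  · have h1 : (m+1) % 3 = 2 := by omega
    have h2 : (m+1) / 3 = m / 3 := by omega
    have eA : twoSeq m = {2*(m/3)+1, 2*(m/3)+3} := by rw [twoSeq_eq]; simp [h]
    have eB : twoSeq (m+1) = {2*(m/3)+2, 2*(m/3)+3} := by rw [twoSeq_eq]; simp [h1, h2]
    rw [eA, eB]
    refine ⟨2*(m/3)+2, 2*(m/3)+1, ?_, ?_, by omega, ?_⟩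
    · simp
    · simp
    · ext x
      simp only [Finset.mem_insert, Finset.mem_singleton, Finset.mem_erase]
      omega
  · have h1 : (m+1) % 3 = 0 := by omega
    have h2 : (m+1) / 3 = m / 3 + 1 := by omega
    have eA : twoSeq m = {2*(m/3)+2, 2*(m/3)+3} := by rw [twoSeq_eq]; simp [h]
    have eB : twoSeq (m+1) = {2*(m/3)+3, 2*(m/3)+4} := by
      rw [twoSeq_eq]; simp [h1, h2]; ring_nf
    rw [eA, eB]
    refine ⟨2*(m/3)+4, 2*(m/3)+2, ?_, ?_, by omega, ?_⟩
    · simp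
    · simp
    · ext x
      simp only [Finset.mem_insert, Finset.mem_singleton, Finset.mem_erase]
      omega

theorem stmt14 (n : ℕ) (hn : 3 ≤ n) :
    IsMWSPath ((List.range ((3 * n + 1) / 2 - 2)).map twoSeq) ∧
    ((List.range ((3 * n + 1) / 2 - 2)).map twoSeq).head? = some {1, 2} ∧
    ((List.range ((3 * n + 1) / 2 - 2)).map twoSeq).getLast? = some {n - 1, n} := by
  set N := (3 * n + 1) / 2 - 2 with hN
  obtain ⟨K, hK⟩ : ∃ K, N = K + 1 := ⟨N - 1, by omega⟩
  refine ⟨⟨?_, ?_⟩, ?_, ?_⟩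
  · intro A hA B hB
    simp only [List.mem_map] at hA hB
    obtain ⟨i, _, rfl⟩ := hA
    obtain ⟨j, _, rfl⟩ := hB
    exact ws_good (good_twoSeq i) (good_twoSeq j)
  · rw [List.Chain', List.isChain_map, hK, List.isChain_range_succ]
    intro m _
    exact twoSeq_step m
  · rw [hK, List.range_succ_eq_map]
    simp [twoSeq]
  · rw [hK, List.getLast?_map, List.range_succ, List.getLast?_concat]
    simp only [Option.map_some]
    congr 1
    rw [twoSeq_eq]
    have hK3 : K = (3 * n + 1) / 2 - 3 := by omega
    split_ifs with h1 h2 <;> (ext x; simp only [Finset.mem_insert, Finset.mem_singleton]; omega)
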